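/- The coordinate-sampler generator annihilates the invariant measure on coordinate functions: for the target ρ(dx, dv) = π(dx) φ(dv) with π(x) ∝ e^{-U(x)} and φ uniform on 𝒱 = {±e_i}, and for any compactly supported C^1 function f on ℝ^d × 𝒱, one has ∫ [⟨v, ∇_x f(x,v)⟩ + λ(x,v) Σ_{v*∈𝒱} (λ(x,-v*)/λ(x)) (f(x,v*) - f(x,v))] ρ(dx,dv) = 0, where λ(x,v) = λ^ref + ⟨v,∇U(x)⟩_+ and λ(x) = Σ_{v∈𝒱} λ(x,v). -/

import Mathlib

open MeasureTheory Metric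
open scoped InnerProductSpace


variable {d : ℕ}

lemma cs_inner_gradient (h : EuclideanSpace ℝ (Fin d) → ℝ) (x v : EuclideanSpace ℝ (Fin d)) :
    ⟪v, gradient h x⟫_ℝ = fderiv ℝ h x v := by
  rw [real_inner_comm]
  exact InnerProductSpace.toDual_symm_apply

lemma cs_ibp (U : EuclideanSpace ℝ (Fin d) → ℝ) (hU : ContDiff ℝ 1 U)
    (v : EuclideanSpace ℝ (Fin d)) (g : EuclideanSpace ℝ (Fin d) → ℝ)
    (hg : ContDiff ℝ 1 g) (hgc : HasCompactSupport g) :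
    ∫ x, Real.exp (-U x) * ⟪v, gradient g x⟫_ℝ
      = ∫ x, Real.exp (-U x) * ⟪v, gradient U x⟫_ℝ * g x := by
  obtain ⟨R, hsub⟩ := hgc.isCompact.isBounded.subset_closedBall 0
  have hsub' : tsupport g ⊆ closedBall (0 : EuclideanSpace ℝ (Fin d)) (max R 0) :=
    hsub.trans (closedBall_subset_closedBall (le_max_left _ _))
  set R' : ℝ := max R 0 with hR'
  have hR0 : 0 ≤ R' := le_max_right _ _
  set c : ContDiffBump (0 : EuclideanSpace ℝ (Fin d)) :=
    { rIn := R' + 1, rOut := R' + 2, rIn_pos := by linarith, rIn_lt_rOut := by linarith }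
  set F : EuclideanSpace ℝ (Fin d) → ℝ := fun x => c x * Real.exp (-U x) with hF
  have hUe : ContDiff ℝ 1 (fun x => Real.exp (-U x)) := hU.neg.exp
  have hFc : HasCompactSupport F := c.hasCompactSupport.mul_right
  have hFs : ContDiff ℝ 1 F := c.contDiff.mul hUe
  obtain ⟨C, hC⟩ := hFs.lipschitzWith_of_hasCompactSupport hFc one_ne_zero
  obtain ⟨D, hD⟩ := hg.lipschitzWith_of_hasCompactSupport hgc one_ne_zero
  have key := LipschitzWith.integral_lineDeriv_mul_eq (μ := (volume : Measure (EuclideanSpace ℝ (Fin d)))) hC hD hgc v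
  -- derivative of exp(-U)
  have hde : ∀ x : EuclideanSpace ℝ (Fin d),
      lineDeriv ℝ (fun y => Real.exp (-U y)) x v
        = -(Real.exp (-U x) * ⟪v, gradient U x⟫_ℝ) := by
    intro x
    have hd : HasFDerivAt (fun y => Real.exp (-U y))
        (Real.exp (-U x) • (-(fderiv ℝ U x))) x :=
      ((hU.differentiable one_ne_zero x).hasFDerivAt.neg).exp
    rw [(hd.differentiableAt).lineDeriv_eq_fderiv, hd.fderiv, cs_inner_gradient]
    simp [mul_comm]
  have h1 : ∀ x, lineDeriv ℝ F x v * g x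
      = -(Real.exp (-U x) * ⟪v, gradient U x⟫_ℝ * g x) := by
    intro x
    by_cases hx : x ∈ ball (0 : EuclideanSpace ℝ (Fin d)) (R' + 1)
    · have hev : F =ᶠ[nhds x] (fun y => Real.exp (-U y)) := by
        filter_upwards [isOpen_ball.mem_nhds hx] with y hy
        have : c y = 1 := c.one_of_mem_closedBall (ball_subset_closedBall hy)
        simp [hF, this]
      rw [hev.lineDeriv_eq, hde x]
      ring
    · have hxg : g x = 0 := by
        apply image_eq_zero_of_notMem_tsupport
        intro hxt
        exact hx (closedBall_subset_ball (by linarith) (hsub' hxt))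
      simp [hxg]
  have h2 : ∀ x, lineDeriv ℝ g x (-v)
      * F x = -(Real.exp (-U x) * ⟪v, gradient g x⟫_ℝ) := by
    intro x
    have hgd : DifferentiableAt ℝ g x := hg.differentiable one_ne_zero x
    rw [hgd.lineDeriv_eq_fderiv, cs_inner_gradient]
    by_cases hx : x ∈ tsupport g
    · have hxball : x ∈ closedBall (0 : EuclideanSpace ℝ (Fin d)) c.rIn := by
        apply closedBall_subset_closedBall _ (hsub' hx)
        show R' ≤ R' + 1
        linarith
      have : c x = 1 := c.one_of_mem_closedBall hxball
      simp [hF, this]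
      ring
    · have hz : fderiv ℝ g x = 0 := by
        have := support_fderiv_subset ℝ (f := g)
        by_contra h
        exact hx (this h)
      simp [hz]
  simp_rw [h1, h2, integral_neg] at key
  exact (neg_injective key).symm

lemma cs_core {ι : Type*} [Fintype ι] (as bs Fs ss : ι → ℝ) (Λ : ℝ) (hΛ : Λ ≠ 0)
    (ha : ∑ p, as p = Λ) (hb : ∑ p, bs p = Λ) (hab : ∀ p, bs p - as p = -ss p) :
    ∑ p, as p * ∑ q, (bs q / Λ) * (Fs q - Fs p) = ∑ p, -(ss p * Fs p) := by
  have hone : ∑ q, bs q / Λ = 1 := by rw [← Finset.sum_div, hb, div_self hΛ]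
  have hinner : ∀ p, ∑ q, (bs q / Λ) * (Fs q - Fs p)
      = (∑ q, (bs q / Λ) * Fs q) - Fs p := by
    intro p
    simp_rw [mul_sub]
    rw [Finset.sum_sub_distrib, ← Finset.sum_mul, hone, one_mul]
  simp_rw [hinner, mul_sub]
  rw [Finset.sum_sub_distrib, ← Finset.sum_mul, ha, Finset.mul_sum]
  have hcan : ∀ q, Λ * (bs q / Λ * Fs q) = bs q * Fs q := by
    intro q; field_simp
  simp_rw [hcan]
  rw [← Finset.sum_sub_distrib]
  apply Finset.sum_congr rfl
  intro p _
  rw [← sub_mul, hab p]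
  ring


/-- The coordinate-sampler generator integrates to zero against
`ρ(dx,dv) = π(dx) φ(dv)`, with `π(x) ∝ e^{-U(x)}` and `φ` uniform on `𝒱 = {±e_i}`,
for every compactly supported `C¹` test function `f`.  Here the elements of `𝒱` are
indexed by `Fin d × Bool` via `vec (i, b) = (if b then 1 else -1) • e_i`. -/
theorem coordinate_sampler_generator_integrates_to_zero
    (d : ℕ) (hd : 0 < d) (U : EuclideanSpace ℝ (Fin d) → ℝ) (hU : ContDiff ℝ 1 U)
    (hint : Integrable (fun x : EuclideanSpace ℝ (Fin d) => Real.exp (-U x)))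
    (Z : ℝ) (hZ : Z = ∫ x : EuclideanSpace ℝ (Fin d), Real.exp (-U x))
    (lref : ℝ) (hlref : 0 < lref)
    (vec : Fin d × Bool → EuclideanSpace ℝ (Fin d))
    (hvec : ∀ p, vec p = (if p.2 then (1:ℝ) else -1) • EuclideanSpace.single p.1 (1:ℝ))
    (lam : EuclideanSpace ℝ (Fin d) → EuclideanSpace ℝ (Fin d) → ℝ)
    (hlam : ∀ x v, lam x v = lref + max ⟪v, gradient U x⟫_ℝ 0)
    (lamTot : EuclideanSpace ℝ (Fin d) → ℝ)
    (hlamTot : ∀ x, lamTot x = ∑ p : Fin d × Bool, lam x (vec p))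
    (f : EuclideanSpace ℝ (Fin d) → (Fin d × Bool) → ℝ)
    (hf : ∀ p, ContDiff ℝ 1 (fun x => f x p) ∧ HasCompactSupport (fun x => f x p)) :
    (1 / (2 * d * Z)) *
      ∑ p : Fin d × Bool,
        ∫ x : EuclideanSpace ℝ (Fin d),
          Real.exp (-U x) *
            (⟪vec p, gradient (fun y => f y p) x⟫_ℝ +
              lam x (vec p) *
                ∑ q : Fin d × Bool,
                  (lam x (-vec q) / lamTot x) * (f x q - f x p)) = 0 := by
  haveI : Nonempty (Fin d) := Fin.pos_iff_nonempty.mp hd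
  -- continuity facts
  have hUc : Continuous fun x => fderiv ℝ U x := hU.continuous_fderiv one_ne_zero
  have hexpc : Continuous fun x : EuclideanSpace ℝ (Fin d) => Real.exp (-U x) :=
    (hU.continuous.neg).rexp
  have hlamc : ∀ v, Continuous (fun x => lam x v) := by
    intro v
    have hrw : (fun x => lam x v) = fun x => lref + max (fderiv ℝ U x v) 0 :=
      funext fun x => by rw [hlam, cs_inner_gradient]
    rw [hrw]
    exact continuous_const.add ((hUc.clm_apply continuous_const).max continuous_const)
  have hlamTotc : Continuous lamTot := by
    have hrw : lamTot = fun x => ∑ p : Fin d × Bool, lam x (vec p) := funext hlamTot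
    rw [hrw]
    exact continuous_finset_sum _ (fun p _ => hlamc (vec p))
  have hpos : ∀ x, 0 < lamTot x := by
    intro x
    rw [hlamTot]
    apply Finset.sum_pos _ Finset.univ_nonempty
    intro p _
    rw [hlam]
    have : (0:ℝ) ≤ max ⟪vec p, gradient U x⟫_ℝ 0 := le_max_right _ _
    linarith
  -- negation of directions
  have hvecneg : ∀ p : Fin d × Bool, -vec p = vec (p.1, !p.2) := by
    intro p
    rw [hvec, hvec]
    cases hb : p.2 <;> simp
  have hbij : Function.Bijective (fun p : Fin d × Bool => (p.1, !p.2)) :=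
    Function.Involutive.bijective (fun p => by simp)
  have hb_sum : ∀ x, ∑ p : Fin d × Bool, lam x (-vec p) = lamTot x := by
    intro x
    rw [hlamTot]
    exact Fintype.sum_bijective _ hbij _ _ (fun p => by rw [hvecneg p])
  have hab : ∀ x (p : Fin d × Bool),
      lam x (-vec p) - lam x (vec p) = -⟪vec p, gradient U x⟫_ℝ := by
    intro x p
    rw [hlam, hlam, inner_neg_left]
    have := max_zero_sub_max_neg_zero_eq_self (⟪vec p, gradient U x⟫_ℝ)
    linarith
  -- the three integrands
  set A : (Fin d × Bool) → EuclideanSpace ℝ (Fin d) → ℝ :=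
    fun p x => Real.exp (-U x) * ⟪vec p, gradient (fun y => f y p) x⟫_ℝ with hA
  set B : (Fin d × Bool) → EuclideanSpace ℝ (Fin d) → ℝ :=
    fun p x => Real.exp (-U x) *
      (lam x (vec p) * ∑ q : Fin d × Bool, (lam x (-vec q) / lamTot x) * (f x q - f x p)) with hB
  set J : (Fin d × Bool) → EuclideanSpace ℝ (Fin d) → ℝ :=
    fun p x => Real.exp (-U x) * ⟪vec p, gradient U x⟫_ℝ * f x p with hJ
  -- integrability
  have IntA : ∀ p, Integrable (A p) := by
    intro p
    apply Continuous.integrable_of_hasCompactSupport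
    · have hrw : A p = fun x => Real.exp (-U x) * fderiv ℝ (fun y => f y p) x (vec p) :=
        funext fun x => by simp only [hA, cs_inner_gradient]
      rw [hrw]
      exact hexpc.mul (((hf p).1.continuous_fderiv one_ne_zero).clm_apply continuous_const)
    · have h1 : HasCompactSupport (fun x => ⟪vec p, gradient (fun y => f y p) x⟫_ℝ) := by
        have hrw : (fun x => ⟪vec p, gradient (fun y => f y p) x⟫_ℝ)
            = fun x => fderiv ℝ (fun y => f y p) x (vec p) :=
          funext fun x => by simp only [cs_inner_gradient]
        rw [hrw]
        exact (hf p).2.fderiv_apply ℝ (vec p)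
      exact h1.mul_left
  have hsumc : ∀ p, Continuous (fun x =>
      ∑ q : Fin d × Bool, (lam x (-vec q) / lamTot x) * (f x q - f x p)) := by
    intro p
    apply continuous_finset_sum
    intro q _
    exact ((hlamc (-vec q)).div hlamTotc (fun x => (hpos x).ne')).mul
      (((hf q).1.continuous).sub ((hf p).1.continuous))
  have hsub : ∀ p q : Fin d × Bool, HasCompactSupport (fun x => f x q - f x p) := by
    intro p q
    have hneg : HasCompactSupport (fun x => -(f x p)) :=
      (hf p).2.comp_left (g := Neg.neg) (by simp)
    simpa [sub_eq_add_neg, Pi.add_def] using (hf q).2.add hneg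
  have hsumcs : ∀ p, HasCompactSupport (fun x =>
      ∑ q : Fin d × Bool, (lam x (-vec q) / lamTot x) * (f x q - f x p)) := by
    intro p
    classical
    have : ∀ s : Finset (Fin d × Bool), HasCompactSupport (fun x =>
        ∑ q ∈ s, (lam x (-vec q) / lamTot x) * (f x q - f x p)) := by
      intro s
      induction s using Finset.induction_on with
      | empty =>
          simp only [Finset.sum_empty]
          exact HasCompactSupport.intro isCompact_empty (fun x _ => rfl)
      | insert _ _ hni ih =>
          simp only [Finset.sum_insert hni]
          exact HasCompactSupport.add ((hsub p _).mul_left) ih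
    exact this Finset.univ
  have IntB : ∀ p, Integrable (B p) := by
    intro p
    apply Continuous.integrable_of_hasCompactSupport
    · exact hexpc.mul ((hlamc (vec p)).mul (hsumc p))
    · exact ((hsumcs p).mul_left).mul_left
  have IntJ : ∀ p, Integrable (J p) := by
    intro p
    apply Continuous.integrable_of_hasCompactSupport
    · have hrw : J p = fun x => (Real.exp (-U x) * fderiv ℝ U x (vec p)) * f x p :=
        funext fun x => by simp only [hJ, cs_inner_gradient]
      rw [hrw]
      exact (hexpc.mul (hUc.clm_apply continuous_const)).mul (hf p).1.continuous
    · exact (hf p).2.mul_left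
  -- final assembly
  have hsplit : ∀ p : Fin d × Bool,
      (∫ x : EuclideanSpace ℝ (Fin d),
          Real.exp (-U x) *
            (⟪vec p, gradient (fun y => f y p) x⟫_ℝ +
              lam x (vec p) *
                ∑ q : Fin d × Bool,
                  (lam x (-vec q) / lamTot x) * (f x q - f x p)))
        = (∫ x, A p x) + ∫ x, B p x := by
    intro p
    rw [← integral_add (IntA p) (IntB p)]
    apply integral_congr_ae
    apply Filter.Eventually.of_forall
    intro x
    simp only [hA, hB]
    ring
  have hIA : ∀ p : Fin d × Bool, (∫ x, A p x) = ∫ x, J p x := by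
    intro p
    simp only [hA, hJ]
    exact cs_ibp U hU (vec p) (fun y => f y p) (hf p).1 (hf p).2
  have hkey : ∀ x, ∑ p : Fin d × Bool, B p x = ∑ p : Fin d × Bool, -(J p x) := by
    intro x
    have h0 := cs_core (fun p : Fin d × Bool => lam x (vec p)) (fun p => lam x (-vec p))
      (fun p => f x p) (fun p => ⟪vec p, gradient U x⟫_ℝ) (lamTot x) (hpos x).ne'
      (hlamTot x).symm (hb_sum x) (fun p => hab x p)
    simp only [hB, hJ]
    rw [← Finset.mul_sum, h0, Finset.mul_sum]
    apply Finset.sum_congr rfl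
    intro p _
    ring
  have hIB : ∑ p : Fin d × Bool, (∫ x, B p x) = -∑ p : Fin d × Bool, ∫ x, J p x := by
    rw [← integral_finset_sum _ (fun p _ => IntB p)]
    rw [integral_congr_ae (Filter.Eventually.of_forall hkey)]
    rw [integral_finset_sum (μ := volume) Finset.univ
      (f := fun (p : Fin d × Bool) x => -(J p x)) (fun p _ => (IntJ p).neg)]
    simp_rw [integral_neg]
    exact Finset.sum_neg_distrib _
  have hfinal : (∑ p : Fin d × Bool,
      ∫ x : EuclideanSpace ℝ (Fin d),
        Real.exp (-U x) *
          (⟪vec p, gradient (fun y => f y p) x⟫_ℝ +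
            lam x (vec p) *
              ∑ q : Fin d × Bool,
                (lam x (-vec q) / lamTot x) * (f x q - f x p))) = 0 := by
    calc (∑ p : Fin d × Bool, ∫ x : EuclideanSpace ℝ (Fin d),
        Real.exp (-U x) *
          (⟪vec p, gradient (fun y => f y p) x⟫_ℝ +
            lam x (vec p) *
              ∑ q : Fin d × Bool,
                (lam x (-vec q) / lamTot x) * (f x q - f x p)))
        = ∑ p : Fin d × Bool, ((∫ x, A p x) + ∫ x, B p x) :=
          Finset.sum_congr rfl (fun p _ => hsplit p)
      _ = (∑ p : Fin d × Bool, ∫ x, A p x) + ∑ p : Fin d × Bool, ∫ x, B p x :=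
          Finset.sum_add_distrib
      _ = (∑ p : Fin d × Bool, ∫ x, J p x) + -(∑ p : Fin d × Bool, ∫ x, J p x) := by
          rw [hIB]
          congr 1
          exact Finset.sum_congr rfl (fun p _ => hIA p)
      _ = 0 := add_neg_cancel _
  rw [hfinal, mul_zero]
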